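/- Let E be a real inner product space and let w, w*, z ∈ E with w* ≠ 0, ⟪w, w*⟫ ≥ 0 and ⟪z, w*⟫ ≤ −1. If x̃ = z + c • w for some real c with c · ‖w‖ ≤ 1/(2‖w*‖), then ⟪x̃, w*⟫ ≤ −1/2. -/

import Mathlib

open RealInnerProductSpace

theorem surrogate_negative_half_margin_underestimate
    {E : Type*} [NormedAddCommGroup E] [InnerProductSpace ℝ E]
    (w wstar z : E) (hws : wstar ≠ 0)
    (hw : ⟪w, wstar⟫ ≥ 0) (hz : ⟪z, wstar⟫ ≤ -1)
    (xtilde : E) (c : ℝ) (hc : c * ‖w‖ ≤ 1 / (2 * ‖wstar‖))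
    (hx : xtilde = z + c • w) :
    ⟪xtilde, wstar⟫ ≤ -(1 / 2) := by
  have hwsn : (0:ℝ) < ‖wstar‖ := norm_pos_iff.mpr hws
  have key : c * ⟪w, wstar⟫ ≤ 1 / 2 := by
    rcases le_or_gt c 0 with hcle | hcpos
    · calc c * ⟪w, wstar⟫ ≤ 0 := mul_nonpos_of_nonpos_of_nonneg hcle hw
        _ ≤ 1 / 2 := by norm_num
    · have h1 : ⟪w, wstar⟫ ≤ ‖w‖ * ‖wstar‖ := real_inner_le_norm w wstar
      calc c * ⟪w, wstar⟫ ≤ c * (‖w‖ * ‖wstar‖) := by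
            exact mul_le_mul_of_nonneg_left h1 hcpos.le
        _ = (c * ‖w‖) * ‖wstar‖ := by ring
        _ ≤ (1 / (2 * ‖wstar‖)) * ‖wstar‖ := by
            exact mul_le_mul_of_nonneg_right hc hwsn.le
        _ = 1 / 2 := by field_simp
  rw [hx, inner_add_left, real_inner_smul_left]
  linarith
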